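/- The decomposition of a diagonal ±1 matrix with leading entry +1 into a product of distinct CZ_S gates is unique: if two subsets 𝒜, ℬ of nonempty subsets of Fin n satisfy ∏_{S ∈ 𝒜} CZ_S = ∏_{S ∈ ℬ} CZ_S, then 𝒜 = ℬ. -/

import Mathlib

/-- The multiple-controlled `Z` gate on the set `S` of qubits. -/
def CZ {n : ℕ} (S : Finset (Fin n)) : Matrix (Fin n → Bool) (Fin n → Bool) ℂ :=
  Matrix.diagonal (fun x => if ∀ j ∈ S, x j = true then -1 else 1)

/-- Any two multiple-controlled `Z` gates commute. -/
theorem CZ_commute {n : ℕ} (S T : Finset (Fin n)) : Commute (CZ S) (CZ T) := by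
  unfold CZ
  simp only [Commute, SemiconjBy, Matrix.diagonal_mul_diagonal, mul_comm]

lemma noncommProd_CZ_eq {n : ℕ} (𝒜 : Finset {S : Finset (Fin n) // S.Nonempty}) :
    𝒜.noncommProd (fun S => CZ S.1) (fun S _ T _ _ => CZ_commute S.1 T.1) =
      Matrix.diagonal (fun x => ∏ S ∈ 𝒜, (if ∀ j ∈ S.1, x j = true then (-1 : ℂ) else 1)) := by
  induction 𝒜 using Finset.induction_on with
  | empty => simp [Finset.noncommProd_empty, Matrix.diagonal_one]; rfl
  | insert _ _ hA ih =>
    erw [Finset.noncommProd_insert_of_notMem _ _ _ _ hA, ih]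
    simp only [CZ, Matrix.diagonal_mul_diagonal]
    apply congrArg Matrix.diagonal
    funext x
    rw [Finset.prod_insert hA]

lemma neg_one_pow_mod {a b : ℕ} (h : ((-1 : ℂ))^a = (-1)^b) : a % 2 = b % 2 := by
  rcases Nat.even_or_odd a with ha | ha <;> rcases Nat.even_or_odd b with hb | hb
  · rw [Nat.even_iff.mp ha, Nat.even_iff.mp hb]
  · rw [ha.neg_one_pow, hb.neg_one_pow] at h; norm_num at h
  · rw [ha.neg_one_pow, hb.neg_one_pow] at h; norm_num at h
  · rw [Nat.odd_iff.mp ha, Nat.odd_iff.mp hb]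

theorem prod_CZ_injective {n : ℕ}
    (𝒜 ℬ : Finset {S : Finset (Fin n) // S.Nonempty})
    (h : 𝒜.noncommProd (fun S => CZ S.1) (fun S _ T _ _ => CZ_commute S.1 T.1) =
         ℬ.noncommProd (fun S => CZ S.1) (fun S _ T _ _ => CZ_commute S.1 T.1)) :
    𝒜 = ℬ := by
  rw [noncommProd_CZ_eq, noncommProd_CZ_eq] at h
  -- diagonal entries equal
  have hdiag : ∀ x : Fin n → Bool,
      (𝒜.filter (fun S => ∀ j ∈ S.1, x j = true)).card % 2 =
      (ℬ.filter (fun S => ∀ j ∈ S.1, x j = true)).card % 2 := by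
    intro x
    have := congrFun (congrFun h x) x
    simp only [Matrix.diagonal_apply_eq] at this
    rw [Finset.prod_ite, Finset.prod_const, Finset.prod_const, one_pow, mul_one,
      Finset.prod_ite, Finset.prod_const, Finset.prod_const, one_pow, mul_one] at this
    exact neg_one_pow_mod this
  suffices key : ∀ S : Finset (Fin n), ∀ hS : S.Nonempty,
      ((⟨S, hS⟩ : {S : Finset (Fin n) // S.Nonempty}) ∈ 𝒜 ↔ ⟨S, hS⟩ ∈ ℬ) by
    ext ⟨S, hS⟩; exact key S hS
  intro S
  induction S using Finset.strongInduction with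
  | _ S IH =>
    intro hS
    set x : Fin n → Bool := fun j => decide (j ∈ S) with hx
    have hcond : ∀ T : {S : Finset (Fin n) // S.Nonempty},
        (∀ j ∈ T.1, x j = true) ↔ T.1 ⊆ S := by
      intro T
      simp [hx, Finset.subset_iff]
    have hP := hdiag x
    have hfil : ∀ 𝒞 : Finset {S : Finset (Fin n) // S.Nonempty},
        𝒞.filter (fun T => ∀ j ∈ T.1, x j = true) =
          𝒞.filter (fun T => T.1 ⊂ S) ∪ 𝒞.filter (fun T => T.1 = S) := by
      intro 𝒞
      rw [← Finset.filter_or]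
      apply Finset.filter_congr
      intro T _
      rw [hcond T]
      constructor
      · intro hTS
        rcases eq_or_ne T.1 S with he | hne
        · exact Or.inr he
        · exact Or.inl (Finset.ssubset_iff_subset_ne.mpr ⟨hTS, hne⟩)
      · rintro (h1 | h1)
        · exact h1.subset
        · exact h1.le
    have hdisj : ∀ 𝒞 : Finset {S : Finset (Fin n) // S.Nonempty},
        Disjoint (𝒞.filter (fun T => T.1 ⊂ S)) (𝒞.filter (fun T => T.1 = S)) := by
      intro 𝒞
      rw [Finset.disjoint_left]
      intro T hT1 hT2
      simp only [Finset.mem_filter] at hT1 hT2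
      exact (Finset.ssubset_iff_subset_ne.mp hT1.2).2 hT2.2
    rw [hfil 𝒜, hfil ℬ, Finset.card_union_of_disjoint (hdisj 𝒜),
      Finset.card_union_of_disjoint (hdisj ℬ)] at hP
    have hproper : 𝒜.filter (fun T => T.1 ⊂ S) = ℬ.filter (fun T => T.1 ⊂ S) := by
      ext T
      simp only [Finset.mem_filter, and_congr_left_iff]
      intro hT
      have := IH T.1 hT
      obtain ⟨T, hTne⟩ := T
      exact this hTne
    rw [hproper] at hP
    have hcard : ∀ 𝒞 : Finset {S : Finset (Fin n) // S.Nonempty},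
        (𝒞.filter (fun T => T.1 = S)).card =
          if (⟨S, hS⟩ : {S : Finset (Fin n) // S.Nonempty}) ∈ 𝒞 then 1 else 0 := by
      intro 𝒞
      have : 𝒞.filter (fun T => T.1 = S) =
          if (⟨S, hS⟩ : {S : Finset (Fin n) // S.Nonempty}) ∈ 𝒞 then {⟨S, hS⟩} else ∅ := by
        split_ifs with hm
        · ext T
          simp only [Finset.mem_filter, Finset.mem_singleton]
          constructor
          · rintro ⟨hT, hTe⟩; exact Subtype.ext hTe
          · rintro rfl; exact ⟨hm, rfl⟩
        · ext T
          simp only [Finset.mem_filter, Finset.notMem_empty, iff_false]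
          rintro ⟨hT, hTe⟩
          have hTS : T = ⟨S, hS⟩ := Subtype.ext hTe
          exact hm (hTS ▸ hT)
      rw [this]
      split_ifs <;> simp
    rw [hcard 𝒜, hcard ℬ] at hP
    by_cases hA : (⟨S, hS⟩ : {S : Finset (Fin n) // S.Nonempty}) ∈ 𝒜 <;>
      by_cases hB : (⟨S, hS⟩ : {S : Finset (Fin n) // S.Nonempty}) ∈ ℬ <;>
      simp only [hA, hB, if_true, if_false, iff_true, iff_false, true_iff, false_iff] at hP ⊢ <;>
      omega
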